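/- Let f ∈ L¹(R³) be nonnegative with f(ξ) = 0 for ξ₁ > 0, ∫ f dξ = 1, and ∫ ξ₁⁻² f(ξ) dξ < ∞. Define V(φ) = ∫₀^φ (ρ_i(ψ) − n_e(ψ)) dψ where ρ_i(φ) = ∫ f(ξ)(−ξ₁)/√(ξ₁²+2φ) dξ and n_e ∈ C²(R) with n_e(0)=1, n_e'(0)=−1. Then V ∈ C²([0,φ_b]) for any φ_b > 0, V(0) = 0, V'(0) = 0, and V''(0) = 1 − ∫ ξ₁⁻² f(ξ) dξ. -/

import Mathlib

open MeasureTheory Real Set Filter Topology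

lemma sqrt_lb {x ψ : ℝ} (hψ : 0 ≤ ψ) : |x| ≤ Real.sqrt (x ^ 2 + 2 * ψ) := by
  rw [← Real.sqrt_sq_eq_abs]
  exact Real.sqrt_le_sqrt (by linarith)

lemma kern_le {x ψ : ℝ} (hψ : 0 ≤ ψ) : |(-x / Real.sqrt (x ^ 2 + 2 * ψ))| ≤ 1 := by
  rcases eq_or_ne x 0 with rfl | hx
  · simp
  · have h1 : |x| ≤ Real.sqrt (x ^ 2 + 2 * ψ) := sqrt_lb hψ
    have h2 : 0 < |x| := abs_pos.2 hx
    rw [abs_div, abs_neg, abs_of_nonneg (Real.sqrt_nonneg _),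
      div_le_one (lt_of_lt_of_le h2 h1)]
    exact h1

lemma kern'_le {x ψ : ℝ} (hψ : 0 ≤ ψ) :
    |x / Real.sqrt (x ^ 2 + 2 * ψ) ^ 3| ≤ 1 / x ^ 2 := by
  rcases eq_or_ne x 0 with rfl | hx
  · simp
  · have h1 : |x| ≤ Real.sqrt (x ^ 2 + 2 * ψ) := sqrt_lb hψ
    have h2 : 0 < |x| := abs_pos.2 hx
    have h3 : |x| ^ 3 ≤ Real.sqrt (x ^ 2 + 2 * ψ) ^ 3 := by
      exact pow_le_pow_left₀ h2.le h1 3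
    have h4 : 0 < |x| ^ 3 := by positivity
    rw [abs_div, abs_pow, abs_of_nonneg (Real.sqrt_nonneg _)]
    calc |x| / Real.sqrt (x ^ 2 + 2 * ψ) ^ 3 ≤ |x| / |x| ^ 3 :=
          div_le_div_of_nonneg_left h2.le h4 h3
      _ = 1 / x ^ 2 := by
          rw [← sq_abs]
          rw [pow_succ, pow_two]
          field_simp

lemma kern_contOn (x : ℝ) :
    ContinuousOn (fun ψ : ℝ => -x / Real.sqrt (x ^ 2 + 2 * ψ)) (Ici 0) := by
  rcases eq_or_ne x 0 with rfl | hx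
  · have : (fun ψ : ℝ => -(0:ℝ) / Real.sqrt (0 ^ 2 + 2 * ψ)) = fun _ => (0:ℝ) := by
      funext ψ; simp
    rw [this]; exact continuousOn_const
  · apply ContinuousOn.div continuousOn_const
    · exact (Real.continuous_sqrt.comp (by continuity)).continuousOn
    · intro ψ hψ
      have hx2 : 0 < x ^ 2 := by positivity
      have : (0:ℝ) ≤ ψ := hψ
      exact (Real.sqrt_pos.2 (by linarith)).ne'

lemma kern'_contOn (x : ℝ) :
    ContinuousOn (fun ψ : ℝ => x / Real.sqrt (x ^ 2 + 2 * ψ) ^ 3) (Ici 0) := by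
  rcases eq_or_ne x 0 with rfl | hx
  · have : (fun ψ : ℝ => (0:ℝ) / Real.sqrt (0 ^ 2 + 2 * ψ) ^ 3) = fun _ => (0:ℝ) := by
      funext ψ; simp
    rw [this]; exact continuousOn_const
  · apply ContinuousOn.div continuousOn_const
    · exact ((Real.continuous_sqrt.comp (by continuity)).pow 3).continuousOn
    · intro ψ hψ
      have hx2 : 0 < x ^ 2 := by positivity
      have : (0:ℝ) ≤ ψ := hψ
      have := Real.sqrt_pos.2 (show 0 < x ^ 2 + 2 * ψ by linarith)
      positivity

lemma kern_deriv {x ψ : ℝ} (h : 0 < x ^ 2 + 2 * ψ) :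
    HasDerivAt (fun t => -x / Real.sqrt (x ^ 2 + 2 * t))
      (x / Real.sqrt (x ^ 2 + 2 * ψ) ^ 3) ψ := by
  have hs : 0 < Real.sqrt (x ^ 2 + 2 * ψ) := Real.sqrt_pos.2 h
  have h1 : HasDerivAt (fun t : ℝ => x ^ 2 + 2 * t) 2 ψ := by
    simpa using ((hasDerivAt_id ψ).const_mul 2).const_add (x ^ 2)
  have h2 : HasDerivAt (fun t : ℝ => Real.sqrt (x ^ 2 + 2 * t))
      (2 / (2 * Real.sqrt (x ^ 2 + 2 * ψ))) ψ := h1.sqrt h.ne'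
  have heq : (fun t : ℝ => -x / Real.sqrt (x ^ 2 + 2 * t))
      = fun t => (-x) * (Real.sqrt (x ^ 2 + 2 * t))⁻¹ := by
    funext t; rw [div_eq_mul_inv]
  rw [heq]
  refine ((h2.inv hs.ne').const_mul (-x)).congr_deriv ?_
  rw [eq_comm, pow_succ, Real.sq_sqrt h.le]
  field_simp

lemma kern_meas (ψ : ℝ) :
    Measurable (fun ξ : ℝ × ℝ × ℝ => -ξ.1 / Real.sqrt (ξ.1 ^ 2 + 2 * ψ)) := by
  fun_prop

lemma kern'_meas (ψ : ℝ) :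
    Measurable (fun ξ : ℝ × ℝ × ℝ => ξ.1 / Real.sqrt (ξ.1 ^ 2 + 2 * ψ) ^ 3) := by
  fun_prop

noncomputable def rhoI (f : ℝ × ℝ × ℝ → ℝ) : ℝ → ℝ :=
  fun ψ => ∫ ξ : ℝ × ℝ × ℝ, f ξ * (-ξ.1 / Real.sqrt (ξ.1 ^ 2 + 2 * ψ))

noncomputable def rI (f : ℝ × ℝ × ℝ → ℝ) : ℝ → ℝ :=
  fun ψ => ∫ ξ : ℝ × ℝ × ℝ, f ξ * (ξ.1 / Real.sqrt (ξ.1 ^ 2 + 2 * ψ) ^ 3)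

variable {f : ℝ × ℝ × ℝ → ℝ}

lemma rho_bound (hf0 : ∀ ξ, 0 ≤ f ξ) {ψ : ℝ} (hψ : 0 ≤ ψ) (ξ : ℝ × ℝ × ℝ) :
    ‖f ξ * (-ξ.1 / Real.sqrt (ξ.1 ^ 2 + 2 * ψ))‖ ≤ f ξ := by
  rw [Real.norm_eq_abs, abs_mul]
  calc |f ξ| * |(-ξ.1 / Real.sqrt (ξ.1 ^ 2 + 2 * ψ))| ≤ |f ξ| * 1 :=
        mul_le_mul_of_nonneg_left (kern_le hψ) (abs_nonneg _)
    _ = f ξ := by rw [mul_one, abs_of_nonneg (hf0 ξ)]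

lemma r_bound (hf0 : ∀ ξ, 0 ≤ f ξ) {ψ : ℝ} (hψ : 0 ≤ ψ) (ξ : ℝ × ℝ × ℝ) :
    ‖f ξ * (ξ.1 / Real.sqrt (ξ.1 ^ 2 + 2 * ψ) ^ 3)‖ ≤ f ξ / ξ.1 ^ 2 := by
  rw [Real.norm_eq_abs, abs_mul]
  calc |f ξ| * |(ξ.1 / Real.sqrt (ξ.1 ^ 2 + 2 * ψ) ^ 3)| ≤ |f ξ| * (1 / ξ.1 ^ 2) :=
        mul_le_mul_of_nonneg_left (kern'_le hψ) (abs_nonneg _)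
    _ = f ξ / ξ.1 ^ 2 := by rw [abs_of_nonneg (hf0 ξ), mul_one_div]

lemma rho_integrand_int (hf : Integrable f) (hf0 : ∀ ξ, 0 ≤ f ξ) {ψ : ℝ} (hψ : 0 ≤ ψ) :
    Integrable (fun ξ : ℝ × ℝ × ℝ => f ξ * (-ξ.1 / Real.sqrt (ξ.1 ^ 2 + 2 * ψ))) := by
  refine hf.mono (hf.1.mul (kern_meas ψ).aestronglyMeasurable) (ae_of_all _ fun ξ => ?_)
  rw [Real.norm_eq_abs (f ξ), abs_of_nonneg (hf0 ξ)]
  exact rho_bound hf0 hψ ξ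

lemma rho_contOn (hf : Integrable f) (hf0 : ∀ ξ, 0 ≤ f ξ) :
    ContinuousOn (rhoI f) (Ici 0) := by
  apply continuousOn_of_dominated
    (bound := f)
    (fun ψ _ => hf.1.mul (kern_meas ψ).aestronglyMeasurable)
    (fun ψ hψ => ae_of_all _ (rho_bound hf0 hψ)) hf
  exact ae_of_all _ fun ξ => continuousOn_const.mul (kern_contOn ξ.1)

lemma r_contOn (hf : Integrable f) (hf0 : ∀ ξ, 0 ≤ f ξ)
    (hf2 : Integrable (fun ξ : ℝ × ℝ × ℝ => f ξ / ξ.1 ^ 2)) :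
    ContinuousOn (rI f) (Ici 0) := by
  apply continuousOn_of_dominated
    (bound := fun ξ => f ξ / ξ.1 ^ 2)
    (fun ψ _ => hf.1.mul (kern'_meas ψ).aestronglyMeasurable)
    (fun ψ hψ => ae_of_all _ (r_bound hf0 hψ)) hf2
  exact ae_of_all _ fun ξ => continuousOn_const.mul (kern'_contOn ξ.1)

lemma rho_hasDerivAt (hf : Integrable f) (hf0 : ∀ ξ, 0 ≤ f ξ)
    (hf2 : Integrable (fun ξ : ℝ × ℝ × ℝ => f ξ / ξ.1 ^ 2)) {ψ : ℝ} (hψ : 0 < ψ) :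
    HasDerivAt (rhoI f) (rI f ψ) ψ := by
  have key := hasDerivAt_integral_of_dominated_loc_of_deriv_le
    (F := fun t (ξ : ℝ × ℝ × ℝ) => f ξ * (-ξ.1 / Real.sqrt (ξ.1 ^ 2 + 2 * t)))
    (F' := fun t (ξ : ℝ × ℝ × ℝ) => f ξ * (ξ.1 / Real.sqrt (ξ.1 ^ 2 + 2 * t) ^ 3))
    (bound := fun ξ => f ξ / ξ.1 ^ 2)
    (Metric.ball_mem_nhds ψ (half_pos hψ))
    (Eventually.of_forall fun t => hf.1.mul (kern_meas t).aestronglyMeasurable)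
    (rho_integrand_int hf hf0 hψ.le)
    (hf.1.mul (kern'_meas ψ).aestronglyMeasurable)
    (ae_of_all _ fun ξ t ht => ?_) hf2
    (ae_of_all _ fun ξ t ht => ?_)
  · exact key.2
  · have : 0 ≤ t := by
      rw [Metric.mem_ball, Real.dist_eq, abs_sub_lt_iff] at ht
      linarith [ht.1]
    exact r_bound hf0 this ξ
  · have ht' : 0 < t := by
      rw [Metric.mem_ball, Real.dist_eq, abs_sub_lt_iff] at ht
      linarith [ht.1]
    have : 0 < ξ.1 ^ 2 + 2 * t := by positivity
    exact (kern_deriv this).const_mul (f ξ)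

lemma rho_hasDerivAt0 (hf : Integrable f) (hf0 : ∀ ξ, 0 ≤ f ξ)
    (hf2 : Integrable (fun ξ : ℝ × ℝ × ℝ => f ξ / ξ.1 ^ 2)) :
    HasDerivWithinAt (rhoI f) (rI f 0) (Ici 0) 0 := by
  apply hasDerivWithinAt_Ici_of_tendsto_deriv (s := Ioi 0)
  · exact fun t ht => (rho_hasDerivAt hf hf0 hf2 ht).differentiableAt.differentiableWithinAt
  · exact ((rho_contOn hf hf0) 0 self_mem_Ici).mono Ioi_subset_Ici_self
  · exact self_mem_nhdsWithin
  · have h1 : Tendsto (rI f) (𝓝[>] 0) (𝓝 (rI f 0)) :=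
      ((r_contOn hf hf0 hf2) 0 self_mem_Ici).mono_left (nhdsWithin_mono 0 Ioi_subset_Ici_self)
    refine h1.congr' ?_
    filter_upwards [self_mem_nhdsWithin] with t ht
    exact ((rho_hasDerivAt hf hf0 hf2 ht).deriv).symm

lemma null_fst : (volume : Measure (ℝ × ℝ × ℝ)) {ξ : ℝ × ℝ × ℝ | ξ.1 = 0} = 0 := by
  have h : {ξ : ℝ × ℝ × ℝ | ξ.1 = 0} = ({(0:ℝ)} : Set ℝ) ×ˢ (univ : Set (ℝ × ℝ)) := by
    ext ⟨x, y, z⟩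
    simp only [Set.mem_setOf_eq, Set.mem_prod, Set.mem_singleton_iff, Set.mem_univ, and_true]
  rw [h, Measure.volume_eq_prod, Measure.prod_prod]
  simp

lemma rho_zero (hf0 : ∀ ξ, 0 ≤ f ξ)
    (hfvan : ∀ ξ : ℝ × ℝ × ℝ, 0 < ξ.1 → f ξ = 0)
    (hfmass : ∫ ξ : ℝ × ℝ × ℝ, f ξ = 1) : rhoI f 0 = 1 := by
  have hae : ∀ᵐ ξ : ℝ × ℝ × ℝ, ξ.1 ≠ 0 := by
    rw [ae_iff]
    convert null_fst using 2
    simp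
  rw [rhoI, ← hfmass]
  apply integral_congr_ae
  filter_upwards [hae] with ξ hξ
  rcases lt_or_gt_of_ne hξ with h | h
  · have h0 : Real.sqrt (ξ.1 ^ 2 + 2 * 0) = -ξ.1 := by
      rw [mul_zero, add_zero, Real.sqrt_sq_eq_abs, abs_of_neg h]
    rw [h0, div_self (by linarith : -ξ.1 ≠ 0), mul_one]
  · simp [hfvan ξ h]

lemma r_zero (hfvan : ∀ ξ : ℝ × ℝ × ℝ, 0 < ξ.1 → f ξ = 0) :
    rI f 0 = -∫ ξ : ℝ × ℝ × ℝ, f ξ / ξ.1 ^ 2 := by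
  rw [rI, ← integral_neg]
  apply integral_congr_ae
  apply ae_of_all
  intro ξ
  rcases lt_trichotomy ξ.1 0 with h | h | h
  · have h0 : Real.sqrt (ξ.1 ^ 2 + 2 * 0) = -ξ.1 := by
      rw [mul_zero, add_zero, Real.sqrt_sq_eq_abs, abs_of_neg h]
    simp only []
    rw [h0]
    have hne : ξ.1 ≠ 0 := h.ne
    have key : ξ.1 / (-ξ.1) ^ 3 = -(1 / ξ.1 ^ 2) := by
      rw [show (-ξ.1) ^ 3 = -(ξ.1 ^ 3) by ring, div_neg, neg_inj,
        div_eq_div_iff (pow_ne_zero 3 hne) (pow_ne_zero 2 hne)]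
      ring
    rw [key]
    ring
  · simp [h]
  · simp [hfvan ξ h]

theorem V_C2_and_derivs
    (f : ℝ × ℝ × ℝ → ℝ) (hf : Integrable f) (hf0 : ∀ ξ, 0 ≤ f ξ)
    (hfvan : ∀ ξ : ℝ × ℝ × ℝ, 0 < ξ.1 → f ξ = 0)
    (hfmass : ∫ ξ : ℝ × ℝ × ℝ, f ξ = 1)
    (hf2 : Integrable (fun ξ : ℝ × ℝ × ℝ => f ξ / ξ.1 ^ 2))
    (n_e : ℝ → ℝ) (hne : ContDiff ℝ 2 n_e) (hne0 : n_e 0 = 1)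
    (hne1 : deriv n_e 0 = -1)
    (V : ℝ → ℝ)
    (hV : V = fun φ => ∫ ψ in (0:ℝ)..φ,
      ((∫ ξ : ℝ × ℝ × ℝ, f ξ * (-ξ.1 / Real.sqrt (ξ.1 ^ 2 + 2 * ψ))) - n_e ψ)) :
    (∀ φ_b > (0:ℝ), ContDiffOn ℝ 2 V (Icc 0 φ_b)) ∧
    V 0 = 0 ∧
    derivWithin V (Ici 0) 0 = 0 ∧
    derivWithin (fun φ => derivWithin V (Ici 0) φ) (Ici 0) 0
      = 1 - ∫ ξ : ℝ × ℝ × ℝ, f ξ / ξ.1 ^ 2 := by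
  have hVg : V = fun φ => ∫ ψ in (0:ℝ)..φ, (rhoI f ψ - n_e ψ) := hV
  clear hV
  -- continuity of the integrand g
  have hrho_cont : ContinuousOn (rhoI f) (Ici 0) := rho_contOn hf hf0
  have hg_cont : ContinuousOn (fun ψ => rhoI f ψ - n_e ψ) (Ici 0) :=
    hrho_cont.sub hne.continuous.continuousOn
  have hg_meas : AEStronglyMeasurable (fun ψ => rhoI f ψ - n_e ψ)
      (volume.restrict (Ici 0)) := hg_cont.aestronglyMeasurable measurableSet_Ici
  have hgInt : ∀ φ ∈ Ici (0:ℝ),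
      IntervalIntegrable (fun ψ => rhoI f ψ - n_e ψ) volume 0 φ := by
    intro φ hφ
    apply ContinuousOn.intervalIntegrable
    apply hg_cont.mono
    rw [uIcc_of_le (hφ : (0:ℝ) ≤ φ)]
    exact Icc_subset_Ici_self
  -- first derivative of V
  have hVd : ∀ ψ ∈ Ici (0:ℝ),
      HasDerivWithinAt V (rhoI f ψ - n_e ψ) (Ici 0) ψ := by
    intro ψ hψ
    rw [hVg]
    rcases eq_or_lt_of_le (mem_Ici.1 hψ) with rfl | hψ'
    · exact intervalIntegral.integral_hasDerivWithinAt_right (hgInt 0 self_mem_Ici)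
        ⟨Ici 0, mem_of_superset self_mem_nhdsWithin Ioi_subset_Ici_self, hg_meas⟩
        ((hg_cont 0 self_mem_Ici).mono Ioi_subset_Ici_self)
    · exact (intervalIntegral.integral_hasDerivAt_right (hgInt ψ hψ)
        ⟨Ici 0, Ici_mem_nhds hψ', hg_meas⟩
        ((hg_cont ψ hψ).continuousAt (Ici_mem_nhds hψ'))).hasDerivWithinAt
  have hVW : ∀ ψ ∈ Ici (0:ℝ), derivWithin V (Ici 0) ψ = rhoI f ψ - n_e ψ :=
    fun ψ hψ => (hVd ψ hψ).derivWithin (uniqueDiffOn_Ici 0 ψ hψ)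
  -- derivative of g
  have hne_d : Differentiable ℝ n_e := hne.differentiable (by norm_num)
  have hne_d1 : ContDiff ℝ 1 (deriv n_e) := by
    have h2 : ContDiff ℝ (1 + 1 : ℕ) n_e := by
      exact_mod_cast hne
    exact (contDiff_succ_iff_deriv.1 (by exact_mod_cast h2)).2.2
  have hgd : ∀ ψ ∈ Ici (0:ℝ),
      HasDerivWithinAt (fun t => rhoI f t - n_e t)
        (rI f ψ - deriv n_e ψ) (Ici 0) ψ := by
    intro ψ hψ
    have h1 : HasDerivWithinAt (rhoI f) (rI f ψ) (Ici 0) ψ := by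
      rcases eq_or_lt_of_le (mem_Ici.1 hψ) with rfl | hψ'
      · exact rho_hasDerivAt0 hf hf0 hf2
      · exact (rho_hasDerivAt hf hf0 hf2 hψ').hasDerivWithinAt
    exact h1.sub ((hne_d ψ).hasDerivAt.hasDerivWithinAt)
  have hgW : ∀ ψ ∈ Ici (0:ℝ), derivWithin (fun t => rhoI f t - n_e t) (Ici 0) ψ
      = rI f ψ - deriv n_e ψ :=
    fun ψ hψ => (hgd ψ hψ).derivWithin (uniqueDiffOn_Ici 0 ψ hψ)
  have hr_cont : ContinuousOn (fun ψ => rI f ψ - deriv n_e ψ) (Ici 0) :=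
    (r_contOn hf hf0 hf2).sub hne_d1.continuous.continuousOn
  -- C¹ of g
  have hg_cd : ContDiffOn ℝ 1 (fun ψ => rhoI f ψ - n_e ψ) (Ici 0) := by
    rw [show (1 : WithTop ℕ∞) = 0 + 1 by norm_num,
      contDiffOn_succ_iff_derivWithin (uniqueDiffOn_Ici 0)]
    refine ⟨fun ψ hψ => (hgd ψ hψ).differentiableWithinAt, by simp, ?_⟩
    rw [contDiffOn_zero]
    exact hr_cont.congr hgW
  -- C² of V on Ici 0
  have hV_cd : ContDiffOn ℝ 2 V (Ici 0) := by
    rw [show (2 : WithTop ℕ∞) = 1 + 1 by norm_num,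
      contDiffOn_succ_iff_derivWithin (uniqueDiffOn_Ici 0)]
    exact ⟨fun ψ hψ => (hVd ψ hψ).differentiableWithinAt, by simp, hg_cd.congr hVW⟩
  refine ⟨fun φ_b _ => hV_cd.mono Icc_subset_Ici_self, ?_, ?_, ?_⟩
  · rw [hVg]
    simp
  · rw [hVW 0 self_mem_Ici, rho_zero hf0 hfvan hfmass, hne0]
    ring
  · have h1 : derivWithin (fun φ => derivWithin V (Ici 0) φ) (Ici 0) 0
        = derivWithin (fun ψ => rhoI f ψ - n_e ψ) (Ici 0) 0 :=
      derivWithin_congr hVW (hVW 0 self_mem_Ici)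
    rw [h1, hgW 0 self_mem_Ici, r_zero hfvan, hne1]
    ring
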